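/- Let d ≥ 2, p ∈ (2d/(d+1), 3d/(d+1)), set α_p = p(d+1) − 2d and r = p*/p'. Let α ∈ (0, α_p] and q = 2d/(2d−α) (so that q ∈ [1, r] and 2 − α/d = 2/q). Let C_H > 0 be any constant such that the Hardy–Littlewood–Sobolev inequality ∬_{ℝ^d×ℝ^d} |x−y|^{−α} f(x) f(y) dx dy ≤ C_H ‖f‖_{L^q}^2 holds for all nonnegative f ∈ L^q(ℝ^d), and let C_S > 0 be any constant such that ‖u‖_{L^{p*}} ≤ C_S ‖∇u‖_{L^p} for all u ∈ W^{1,p}(ℝ^d). Then for every nonnegative ρ ∈ L^1(ℝ^d) with ρ^{1/p'} ∈ W^{1,p}(ℝ^d), one has ∬_{ℝ^d×ℝ^d} |x−y|^{−α} ρ(x) ρ(y) dx dy ≤ C_H ((p')^{−1} C_S)^{pα/α_p} ‖ρ‖_{L^1}^{2(1 − (p−1)α/(2α_p))} I_p(ρ)^{α/α_p}. -/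

import Mathlib

open MeasureTheory Real Set
open scoped ENNReal NNReal

noncomputable section

abbrev Ed (d : ℕ) := EuclideanSpace ℝ (Fin d)

def jap {d : ℕ} (x : Ed d) : ℝ := Real.sqrt (1 + ‖x‖ ^ 2)

def LqNorm {d : ℕ} (q : ℝ) (f : Ed d → ℝ) : ℝ := (∫ x : Ed d, |f x| ^ q) ^ (1 / q)

def pconj (p : ℝ) : ℝ := p / (p - 1)

def pstar (d : ℕ) (p : ℝ) : ℝ := d * p / (d - p)

def alphaP (d : ℕ) (p : ℝ) : ℝ := p * (d + 1) - 2 * d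

def MemW1p {d : ℕ} (p : ℝ) (u : Ed d → ℝ) : Prop :=
  Differentiable ℝ u ∧ MemLp u (ENNReal.ofReal p) volume ∧
    MemLp (fun x => ‖gradient u x‖) (ENNReal.ofReal p) volume

def fisherInfo {d : ℕ} (p : ℝ) (ρ : Ed d → ℝ) : ℝ :=
  pconj p ^ p * ∫ x : Ed d, ‖gradient (fun y => ρ y ^ ((p - 1) / p)) x‖ ^ p

def Kker (d : ℕ) (α : ℝ) (x : Ed d) : Ed d := ‖x‖ ^ (-α) • x



set_option maxHeartbeats 1000000
set_option synthInstance.maxHeartbeats 1000000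

lemma norm_gradient_eq {d : ℕ} (f : Ed d → ℝ) (x : Ed d) : ‖gradient f x‖ = ‖fderiv ℝ f x‖ := by
  rw [gradient]; exact LinearIsometryEquiv.norm_map _ _

lemma aesm_grad_norm {d : ℕ} (f : Ed d → ℝ) :
    AEStronglyMeasurable (fun x => ‖gradient f x‖) (volume : Measure (Ed d)) := by
  have : (fun x => ‖gradient f x‖) = fun x => ‖fderiv ℝ f x‖ := funext (norm_gradient_eq f)
  rw [this]
  exact (measurable_fderiv ℝ f).norm.aestronglyMeasurable


lemma psi_facts : ∃ ψ : ℝ → ℝ, ContDiff ℝ (⊤:ℕ∞) ψ ∧ (∀ t, 0 ≤ ψ t) ∧ (∀ t, ψ t ≤ 1) ∧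
    (∀ t ≤ (1:ℝ), ψ t = 1) ∧ (∀ t, (2:ℝ) ≤ t → ψ t = 0) ∧
    ∃ K : ℝ, 0 ≤ K ∧ ∀ t, ‖deriv ψ t‖ ≤ K := by
  refine ⟨fun t => Real.smoothTransition (2 - t), ?_, fun t => Real.smoothTransition.nonneg _,
    fun t => Real.smoothTransition.le_one _, fun t ht => Real.smoothTransition.one_of_one_le (by linarith), fun t ht => Real.smoothTransition.zero_of_nonpos (by linarith), ?_⟩
  · exact Real.smoothTransition.contDiff.comp (contDiff_const.sub contDiff_id)
  · set ψ : ℝ → ℝ := fun t => Real.smoothTransition (2 - t) with hψdef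
    have hψ : ContDiff ℝ (⊤:ℕ∞) ψ :=
      Real.smoothTransition.contDiff.comp (contDiff_const.sub contDiff_id)
    obtain ⟨C, hC⟩ := (isCompact_Icc (a := (1:ℝ)) (b := 2)).exists_bound_of_continuousOn
      (hψ.continuous_deriv (by simp)).continuousOn
    refine ⟨max C 0, le_max_right _ _, fun t => ?_⟩
    rcases le_or_gt t 1 with ht | ht
    · rcases lt_or_eq_of_le ht with ht | ht
      · have : ψ =ᶠ[nhds t] fun _ => 1 := by
          filter_upwards [eventually_lt_nhds ht] with s hs
          exact Real.smoothTransition.one_of_one_le (by linarith)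
        rw [this.deriv_eq, deriv_const]; simpa using le_max_right C 0
      · subst ht; exact le_trans (hC 1 (by simp)) (le_max_left _ _)
    · rcases le_or_gt t 2 with ht2 | ht2
      · exact le_trans (hC t ⟨ht.le, ht2⟩) (le_max_left _ _)
      · have : ψ =ᶠ[nhds t] fun _ => 0 := by
          filter_upwards [eventually_gt_nhds ht2] with s hs
          exact Real.smoothTransition.zero_of_nonpos (by linarith)
        rw [this.deriv_eq, deriv_const]; simpa using le_max_right C 0

lemma cutoff_exists (d : ℕ) : ∃ (χ : ℕ → Ed d → ℝ) (C : ℝ),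
    ∀ n : ℕ, ContDiff ℝ (⊤:ℕ∞) (χ n) ∧ (∀ x, 0 ≤ χ n x) ∧ (∀ x, χ n x ≤ 1) ∧
      (∀ x : Ed d, ‖x‖ ≤ (n:ℝ) + 1 → χ n x = 1) ∧ HasCompactSupport (χ n) ∧
      ∀ x, ‖fderiv ℝ (χ n) x‖ ≤ C := by
  obtain ⟨ψ, hψs, hψ0, hψ1, hψone, hψzero, K, hK0, hKb⟩ := psi_facts
  set χ : ℕ → Ed d → ℝ := fun n x => ψ (‖x‖ ^ 2 / ((n:ℝ) + 1) ^ 2) with hχ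
  refine ⟨χ, 4 * K, fun n => ?_⟩
  have hn1 : (0:ℝ) < (n:ℝ) + 1 := by positivity
  have hg : ∀ x : Ed d, HasFDerivAt (fun x : Ed d => ‖x‖ ^ 2 / ((n:ℝ) + 1) ^ 2)
      ((((n:ℝ) + 1) ^ 2)⁻¹ • (2 • (innerSL ℝ x))) x := by
    intro x
    have := (hasStrictFDerivAt_norm_sq x).hasFDerivAt
    have h2 := this.const_mul ((((n:ℝ) + 1) ^ 2)⁻¹)
    simpa [div_eq_inv_mul] using h2
  have hchain : ∀ x : Ed d, HasFDerivAt (χ n)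
      ((deriv ψ (‖x‖ ^ 2 / ((n:ℝ) + 1) ^ 2)) • ((((n:ℝ) + 1) ^ 2)⁻¹ • (2 • (innerSL ℝ x)))) x := by
    intro x
    exact ((hψs.differentiable (by simp) _).hasDerivAt).comp_hasFDerivAt x (hg x)
  refine ⟨?_, fun x => hψ0 _, fun x => hψ1 _, fun x hx => ?_, ?_, fun x => ?_⟩
  · exact hψs.comp ((contDiff_norm_sq ℝ).div_const _)
  · refine hψone _ ?_
    rw [div_le_one (by positivity)]
    nlinarith [norm_nonneg x]
  · apply HasCompactSupport.intro (isCompact_closedBall (0 : Ed d) (2 * ((n:ℝ)+1)))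
    intro x hx
    simp only [Metric.mem_closedBall, dist_zero_right, not_le] at hx
    refine hψzero _ ?_
    rw [le_div_iff₀ (by positivity)]
    nlinarith [norm_nonneg x]
  · rw [(hchain x).fderiv]
    rcases le_or_gt (‖x‖ ^ 2 / ((n:ℝ) + 1) ^ 2) 2 with ht | ht
    · have hxb : ‖x‖ ≤ 2 * ((n:ℝ) + 1) := by
        rw [div_le_iff₀ (by positivity)] at ht
        nlinarith [norm_nonneg x]
      have h1 : ‖(deriv ψ (‖x‖ ^ 2 / ((n:ℝ) + 1) ^ 2)) • ((((n:ℝ) + 1) ^ 2)⁻¹ • (2 • (innerSL ℝ x)))‖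
          ≤ ‖deriv ψ (‖x‖ ^ 2 / ((n:ℝ) + 1) ^ 2)‖ * ((((n:ℝ) + 1) ^ 2)⁻¹ * (2 * ‖x‖)) := by
        refine (norm_smul_le (deriv ψ (‖x‖ ^ 2 / ((n:ℝ) + 1) ^ 2)) ((((n:ℝ) + 1) ^ 2)⁻¹ • (2 • (innerSL ℝ x)) : Ed d →L[ℝ] ℝ)).trans ?_
        refine mul_le_mul_of_nonneg_left ?_ (norm_nonneg _)
        refine (norm_smul_le ((((n:ℝ) + 1) ^ 2)⁻¹) (2 • (innerSL ℝ x) : Ed d →L[ℝ] ℝ)).trans ?_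
        have h2 : ‖(2 • (innerSL ℝ x) : Ed d →L[ℝ] ℝ)‖ ≤ 2 * ‖x‖ := by
          refine norm_nsmul_le.trans ?_
          simp [innerSL_apply_norm]
        have h3 : ‖((((n:ℝ) + 1) ^ 2)⁻¹ : ℝ)‖ = (((n:ℝ) + 1) ^ 2)⁻¹ := by
          rw [Real.norm_eq_abs, abs_of_nonneg (by positivity)]
        rw [h3]
        exact mul_le_mul_of_nonneg_left h2 (by positivity)
      refine h1.trans ?_
      have : ((((n:ℝ) + 1) ^ 2)⁻¹ * (2 * ‖x‖)) ≤ 4 := by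
        rw [inv_mul_le_iff₀ (by positivity)]
        nlinarith [norm_nonneg x]
      calc ‖deriv ψ (‖x‖ ^ 2 / ((n:ℝ) + 1) ^ 2)‖ * ((((n:ℝ) + 1) ^ 2)⁻¹ * (2 * ‖x‖))
          ≤ K * 4 := mul_le_mul (hKb _) this (by positivity) hK0
        _ = 4 * K := by ring
    · have : deriv ψ (‖x‖ ^ 2 / ((n:ℝ) + 1) ^ 2) = 0 := by
        have : ψ =ᶠ[nhds (‖x‖ ^ 2 / ((n:ℝ) + 1) ^ 2)] fun _ => 0 := by
          filter_upwards [eventually_gt_nhds ht] with s hs using hψzero s hs.le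
        rw [this.deriv_eq, deriv_const]
      rw [this, zero_smul, norm_zero]; positivity



lemma pstar_finite (d : ℕ) (p CS : ℝ) (hp : 1 < p) (hpd : p < (d:ℝ)) (hCS : 0 < CS)
    (hSob : ∀ u : Ed d → ℝ, MemW1p p u →
      LqNorm (pstar d p) u ≤ CS * LqNorm p fun x => ‖gradient u x‖)
    (u : Ed d → ℝ) (hu0 : ∀ x, 0 ≤ u x) (hu : MemW1p p u) :
    ∫⁻ x : Ed d, ENNReal.ofReal (u x ^ pstar d p) < ⊤ := by
  obtain ⟨χ, C, hχ⟩ := cutoff_exists d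
  have hC0 : 0 ≤ C := le_trans (norm_nonneg _) ((hχ 0).2.2.2.2.2 0)
  have hp0 : 0 < p := lt_trans one_pos hp
  have hd0 : (0:ℝ) < d := lt_trans hp0 hpd
  set s := pstar d p with hs
  have hs0 : 0 < s := by
    rw [hs, pstar]; exact div_pos (by positivity) (by linarith)
  have hucont : Continuous u := hu.1.continuous
  -- the cutoff products
  set v : ℕ → Ed d → ℝ := fun n x => u x * χ n x with hv
  have hχcont : ∀ n, Continuous (χ n) := fun n => ((hχ n).1.continuous)
  have hvcont : ∀ n, Continuous (v n) := fun n => hucont.mul (hχcont n)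
  have hvsupp : ∀ n, HasCompactSupport (v n) := fun n =>
    HasCompactSupport.mul_left ((hχ n).2.2.2.2.1) (f := u)
  -- derivative formula and majorant
  set m : Ed d → ℝ := fun x => ‖gradient u x‖ + C * |u x| with hm
  have hm0 : ∀ x, 0 ≤ m x := fun x => by positivity
  have hfd : ∀ n x, HasFDerivAt (v n) (u x • fderiv ℝ (χ n) x + χ n x • fderiv ℝ u x) x := by
    intro n x
    exact (hu.1 x).hasFDerivAt.mul (((hχ n).1.differentiable (by simp)) x).hasFDerivAt
  have hmaj : ∀ n x, ‖gradient (v n) x‖ ≤ m x := by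
    intro n x
    show _ ≤ ‖gradient u x‖ + C * |u x|
    rw [norm_gradient_eq, (hfd n x).fderiv, norm_gradient_eq]
    refine (norm_add_le _ _).trans ?_
    have h1 : ‖u x • fderiv ℝ (χ n) x‖ ≤ |u x| * C := by
      rw [norm_smul, Real.norm_eq_abs]
      exact mul_le_mul_of_nonneg_left ((hχ n).2.2.2.2.2 x) (abs_nonneg _)
    have h2 : ‖χ n x • fderiv ℝ u x‖ ≤ ‖fderiv ℝ u x‖ := by
      rw [norm_smul, Real.norm_eq_abs, abs_of_nonneg ((hχ n).2.1 x)]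
      exact mul_le_of_le_one_left (norm_nonneg _) ((hχ n).2.2.1 x)
    have := add_le_add h1 h2
    linarith
  -- m is in Lp
  have hmmem : MemLp m (ENNReal.ofReal p) (volume : Measure (Ed d)) := by
    refine MemLp.add hu.2.2 ?_
    have : MemLp (fun x => |u x|) (ENNReal.ofReal p) (volume : Measure (Ed d)) := by
      have := hu.2.1.norm
      simpa [Real.norm_eq_abs] using this
    exact this.const_mul C
  have hmint : Integrable (fun x => m x ^ p) (volume : Measure (Ed d)) := by
    have := hmmem.integrable_norm_rpow (by simp [hp0]) ENNReal.ofReal_ne_top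
    rw [ENNReal.toReal_ofReal hp0.le] at this
    refine this.congr (Filter.Eventually.of_forall fun x => ?_)
    simp only [Real.norm_eq_abs, abs_of_nonneg (hm0 x)]
  set B : ℝ := ∫ x : Ed d, m x ^ p with hB
  have hB0 : 0 ≤ B := integral_nonneg fun x => Real.rpow_nonneg (hm0 x) p
  -- v n is in W^{1,p}
  have hvW : ∀ n, MemW1p p (v n) := by
    intro n
    refine ⟨fun x => ((hu.1 x).mul (((hχ n).1.differentiable (by simp)) x)), ?_, ?_⟩
    · refine MemLp.of_le hu.2.1 (hvcont n).aestronglyMeasurable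
        (Filter.Eventually.of_forall fun x => ?_)
      simp only [Real.norm_eq_abs, hv, abs_mul]
      calc |u x| * |χ n x| ≤ |u x| * 1 :=
            mul_le_mul_of_nonneg_left (by rw [abs_of_nonneg ((hχ n).2.1 x)]; exact (hχ n).2.2.1 x)
              (abs_nonneg _)
        _ = |u x| := mul_one _
    · refine MemLp.of_le hmmem (aesm_grad_norm (v n))
        (Filter.Eventually.of_forall fun x => ?_)
      rw [Real.norm_eq_abs, Real.norm_eq_abs, abs_of_nonneg (norm_nonneg _),
        abs_of_nonneg (hm0 x)]
      exact hmaj n x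
  -- the gradient Lp norm bound
  have hgradint : ∀ n, Integrable (fun x => |‖gradient (v n) x‖| ^ p) (volume : Measure (Ed d)) := by
    intro n
    refine hmint.mono ?_ (Filter.Eventually.of_forall fun x => ?_)
    · have : Measurable fun x => ‖fderiv ℝ (v n) x‖ := (measurable_fderiv ℝ (v n)).norm
      have h2 : (fun x => |‖gradient (v n) x‖| ^ p) = fun x => ‖fderiv ℝ (v n) x‖ ^ p := by
        funext x
        rw [abs_of_nonneg (norm_nonneg _), norm_gradient_eq]
      rw [h2]
      exact (this.pow_const _ |>.aestronglyMeasurable)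
    · rw [Real.norm_eq_abs, Real.norm_eq_abs, abs_of_nonneg (Real.rpow_nonneg (abs_nonneg _) _),
        abs_of_nonneg (Real.rpow_nonneg (hm0 x) _), abs_of_nonneg (norm_nonneg _)]
      exact Real.rpow_le_rpow (norm_nonneg _) (hmaj n x) hp0.le
  have hgradbound : ∀ n, LqNorm p (fun x => ‖gradient (v n) x‖) ≤ B ^ (1/p) := by
    intro n
    rw [LqNorm]
    refine Real.rpow_le_rpow (integral_nonneg fun x => Real.rpow_nonneg (abs_nonneg _) _) ?_
      (by positivity)
    refine integral_mono (hgradint n) hmint fun x => ?_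
    rw [abs_of_nonneg (norm_nonneg _)]
    exact Real.rpow_le_rpow (norm_nonneg _) (hmaj n x) hp0.le
  -- Sobolev bound on each v n
  set M : ℝ := CS * B ^ (1/p) with hM
  have hM0 : 0 ≤ M := by positivity
  have hSobn : ∀ n, LqNorm s (v n) ≤ M := fun n =>
    le_trans (hSob (v n) (hvW n)) (mul_le_mul_of_nonneg_left (hgradbound n) hCS.le)
  -- |v n|^s is integrable (continuous + compact support)
  have hvint : ∀ n, Integrable (fun x => |v n x| ^ s) (volume : Measure (Ed d)) := by
    intro n
    refine Continuous.integrable_of_hasCompactSupport ?_ ?_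
    · exact ((hvcont n).abs).rpow_const fun x => Or.inr hs0.le
    · have := HasCompactSupport.comp_left (g := fun t : ℝ => |t| ^ s) (hvsupp n)
        (by simp [Real.zero_rpow hs0.ne'])
      exact this
  have hvIb : ∀ n, ∫ x : Ed d, |v n x| ^ s ≤ M ^ s := by
    intro n
    have hX0 : 0 ≤ ∫ x : Ed d, |v n x| ^ s :=
      integral_nonneg fun x => Real.rpow_nonneg (abs_nonneg _) _
    have h1 : ((∫ x : Ed d, |v n x| ^ s) ^ (1/s)) ^ s = ∫ x : Ed d, |v n x| ^ s := by
      rw [← Real.rpow_mul hX0, one_div, inv_mul_cancel₀ hs0.ne', Real.rpow_one]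
    calc ∫ x : Ed d, |v n x| ^ s = (LqNorm s (v n)) ^ s := by rw [LqNorm, h1]
      _ ≤ M ^ s := Real.rpow_le_rpow (Real.rpow_nonneg hX0 _) (hSobn n) hs0.le
  have hlin : ∀ n, ∫⁻ x : Ed d, ENNReal.ofReal (|v n x| ^ s) ≤ ENNReal.ofReal (M ^ s) := by
    intro n
    rw [← ofReal_integral_eq_lintegral_ofReal (hvint n)
      (Filter.Eventually.of_forall fun x => Real.rpow_nonneg (abs_nonneg _) _)]
    exact ENNReal.ofReal_le_ofReal (hvIb n)
  have key : ∫⁻ x : Ed d, ENNReal.ofReal (u x ^ s) ≤ ENNReal.ofReal (M ^ s) := by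
    have hpt : ∀ x : Ed d, ENNReal.ofReal (u x ^ s) =
        Filter.liminf (fun n => ENNReal.ofReal (|v n x| ^ s)) Filter.atTop := by
      intro x
      have hev : ∀ᶠ n in Filter.atTop, ENNReal.ofReal (|v n x| ^ s) = ENNReal.ofReal (u x ^ s) := by
        filter_upwards [Filter.eventually_ge_atTop ⌈‖x‖⌉₊] with n hn
        have hxn : ‖x‖ ≤ (n:ℝ) + 1 := by
          calc ‖x‖ ≤ (⌈‖x‖⌉₊ : ℝ) := Nat.le_ceil _
            _ ≤ (n:ℝ) := by exact_mod_cast hn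
            _ ≤ (n:ℝ) + 1 := by linarith
        have hχ1 : χ n x = 1 := (hχ n).2.2.2.1 x hxn
        have : v n x = u x := by rw [hv]; simp [hχ1]
        rw [this, abs_of_nonneg (hu0 x)]
      rw [Filter.liminf_congr hev, Filter.liminf_const]
    calc ∫⁻ x : Ed d, ENNReal.ofReal (u x ^ s)
        = ∫⁻ x : Ed d, Filter.liminf (fun n => ENNReal.ofReal (|v n x| ^ s)) Filter.atTop :=
          lintegral_congr hpt
      _ ≤ Filter.liminf (fun n => ∫⁻ x : Ed d, ENNReal.ofReal (|v n x| ^ s)) Filter.atTop := by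
          refine lintegral_liminf_le fun n => ?_
          exact (((hvcont n).abs.rpow_const fun x => Or.inr hs0.le).measurable).ennreal_ofReal
      _ ≤ Filter.liminf (fun _ : ℕ => ENNReal.ofReal (M ^ s)) Filter.atTop :=
          Filter.liminf_le_liminf (Filter.Eventually.of_forall hlin)
      _ = ENNReal.ofReal (M ^ s) := Filter.liminf_const _
  exact lt_of_le_of_lt key ENNReal.ofReal_lt_top

lemma lintegral_interp {X : Type*} [MeasurableSpace X] (μ : Measure X) (F : X → ℝ≥0∞)
    (hF : AEMeasurable F μ) (a b r : ℝ) (ha : 0 < a) (ha1 : a < 1) (hb : 0 < b) (hr : 0 < r)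
    (hsum : a + b / r = 1) :
    ∫⁻ x, F x ^ (a + b) ∂μ ≤ (∫⁻ x, F x ∂μ) ^ a * (∫⁻ x, F x ^ r ∂μ) ^ (b / r) := by
  have he : Real.HolderConjugate (1/a) (r/b) := by
    rw [Real.holderConjugate_iff]; constructor
    · rw [lt_div_iff₀ ha]; linarith
    · rw [one_div, inv_inv, inv_div]; exact hsum
  have hfa : AEMeasurable (fun x => F x ^ a) μ := hF.pow_const a
  have hfb : AEMeasurable (fun x => F x ^ b) μ := hF.pow_const b
  have H := ENNReal.lintegral_mul_le_Lp_mul_Lq μ he hfa hfb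
  have e1 : ∀ x, ((fun x => F x ^ a) * fun x => F x ^ b) x = F x ^ (a + b) := by
    intro x
    simp only [Pi.mul_apply]
    rw [ENNReal.rpow_add_of_nonneg a b ha.le hb.le]
  have e2 : ∀ x, (F x ^ a) ^ (1/a) = F x := by
    intro x
    rw [← ENNReal.rpow_mul, mul_one_div, div_self ha.ne', ENNReal.rpow_one]
  have e3 : ∀ x, (F x ^ b) ^ (r/b) = F x ^ r := by
    intro x
    rw [← ENNReal.rpow_mul, ← mul_div_assoc, mul_comm, mul_div_assoc, div_self hb.ne', mul_one]
  calc ∫⁻ x, F x ^ (a + b) ∂μ = ∫⁻ x, ((fun x => F x ^ a) * fun x => F x ^ b) x ∂μ :=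
        lintegral_congr fun x => (e1 x).symm
    _ ≤ (∫⁻ x, (F x ^ a) ^ (1/a) ∂μ) ^ (1/(1/a)) * (∫⁻ x, (F x ^ b) ^ (r/b) ∂μ) ^ (1/(r/b)) := H
    _ = (∫⁻ x, F x ∂μ) ^ a * (∫⁻ x, F x ^ r ∂μ) ^ (b / r) := by
        rw [lintegral_congr e2, lintegral_congr e3, one_div_one_div, one_div_div]



/-- combining the Hardy–Littlewood–Sobolev inequality (constant `C_H`, exponent
`q = 2d/(2d-α)`) with the Sobolev inequality (constant `C_S`) gives, for `α ∈ (0, α_p]`,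
`∬ |x-y|^{-α} ρ(x)ρ(y) ≤ C_H ((p')⁻¹C_S)^{pα/α_p} ‖ρ‖_{L^1}^{2(1-(p-1)α/(2α_p))} I_p(ρ)^{α/α_p}`. -/
theorem statement6 (d : ℕ) (p α CH CS : ℝ) (hd : 2 ≤ d)
    (hp1 : 2 * (d : ℝ) / ((d : ℝ) + 1) < p) (hp2 : p < 3 * (d : ℝ) / ((d : ℝ) + 1))
    (hα0 : 0 < α) (hα1 : α ≤ alphaP d p)
    (hCH : 0 < CH) (hCS : 0 < CS)
    (hHLS : ∀ f : Ed d → ℝ, (∀ x, 0 ≤ f x) →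
      MemLp f (ENNReal.ofReal (2 * d / (2 * d - α))) volume →
      (∫ x : Ed d, ∫ y : Ed d, ‖x - y‖ ^ (-α) * f x * f y) ≤
        CH * LqNorm (2 * d / (2 * d - α)) f ^ 2)
    (hSob : ∀ u : Ed d → ℝ, MemW1p p u →
      LqNorm (pstar d p) u ≤ CS * LqNorm p fun x => ‖gradient u x‖)
    (ρ : Ed d → ℝ) (hρ0 : ∀ x, 0 ≤ ρ x) (hρ1 : Integrable ρ)
    (hW : MemW1p p fun x => ρ x ^ ((p - 1) / p)) :
    (∫ x : Ed d, ∫ y : Ed d, ‖x - y‖ ^ (-α) * ρ x * ρ y) ≤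
      CH * ((pconj p)⁻¹ * CS) ^ (p * α / alphaP d p) *
        (∫ x : Ed d, ρ x) ^ (2 * (1 - (p - 1) * α / (2 * alphaP d p))) *
        fisherInfo p ρ ^ (α / alphaP d p) := by

  -- basic numerics
  have hD2 : (2:ℝ) ≤ (d:ℝ) := by exact_mod_cast hd
  have hD0 : (0:ℝ) < (d:ℝ) := by linarith
  have hp1' : 1 < p := by
    have h : (1:ℝ) < 2*(d:ℝ)/((d:ℝ)+1) := by rw [lt_div_iff₀ (by linarith)]; linarith
    linarith
  have hp0 : 0 < p := by linarith
  have hpm1 : 0 < p - 1 := by linarith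
  have hpd : p < (d:ℝ) := by
    have h : 3*(d:ℝ)/((d:ℝ)+1) ≤ (d:ℝ) := by rw [div_le_iff₀ (by linarith)]; nlinarith
    linarith
  have hp3 : p < 3 := by
    have h : 3*(d:ℝ)/((d:ℝ)+1) < 3 := by rw [div_lt_iff₀ (by linarith)]; nlinarith
    linarith
  have hA0 : 0 < alphaP d p := by
    have := (div_lt_iff₀ (by linarith : (0:ℝ) < (d:ℝ)+1)).mp hp1
    rw [alphaP]; nlinarith
  have hAd : alphaP d p < (d:ℝ) := by
    have := (lt_div_iff₀ (by linarith : (0:ℝ) < (d:ℝ)+1)).mp hp2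
    rw [alphaP]; nlinarith
  have hαd : α < (d:ℝ) := lt_of_le_of_lt hα1 hAd
  have h2dα : 0 < 2*(d:ℝ) - α := by linarith
  have hp'0 : 0 < pconj p := div_pos hp0 hpm1
  have hs0 : 0 < pstar d p := div_pos (by positivity) (by linarith)
  set q : ℝ := 2 * (d:ℝ) / (2 * (d:ℝ) - α) with hqdef
  have hq1 : 1 < q := by rw [hqdef, lt_div_iff₀ h2dα]; linarith
  have hq0 : 0 < q := by linarith
  set r : ℝ := pstar d p / pconj p with hrdef
  have hr0 : 0 < r := div_pos hs0 hp'0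
  have hp'r : pconj p * r = pstar d p := by
    rw [hrdef]; field_simp
  set θ : ℝ := (p-1)*α/(2*alphaP d p) with hθdef
  have hθ0 : 0 < θ := div_pos (mul_pos hpm1 hα0) (by linarith)
  have hθ1 : θ < 1 := by
    rw [hθdef, div_lt_one (by linarith)]
    nlinarith [mul_le_mul_of_nonneg_left hα1 hpm1.le]
  set a : ℝ := q*(1-θ) with hadef
  set b : ℝ := q*θ with hbdef
  have hb0 : 0 < b := mul_pos hq0 hθ0
  have ha0 : 0 < a := mul_pos hq0 (by linarith)
  have ha1 : a < 1 := by
    have hDA : alphaP d p < (d:ℝ)*(p-1) := by rw [alphaP]; nlinarith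
    have h2dθ : α < 2*(d:ℝ)*θ := by
      rw [hθdef, mul_div_assoc']
      rw [lt_div_iff₀ (by linarith : (0:ℝ) < 2*alphaP d p)]
      nlinarith [mul_lt_mul_of_pos_right hDA hα0]
    rw [hadef, hqdef, div_mul_eq_mul_div, div_lt_one h2dα]
    nlinarith
  have hsum : a + b / r = 1 := by
    have h1 : (d:ℝ) - p ≠ 0 := by linarith
    have h2 : p - 1 ≠ 0 := by linarith
    have h3 : p ≠ 0 := by linarith
    have h4 : 2*(d:ℝ) - α ≠ 0 := by linarith
    have h5 : p*((d:ℝ)+1) - 2*(d:ℝ) ≠ 0 := by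
      have := hA0; rw [alphaP] at this; exact this.ne'
    rw [hadef, hbdef, hθdef, hqdef, hrdef, pconj, pstar, alphaP]
    field_simp
    ring
  have habq : a + b = q := by rw [hadef, hbdef]; ring
  -- the function u
  set u : Ed d → ℝ := fun x => ρ x ^ ((p - 1) / p) with hudef
  have hu0 : ∀ x, 0 ≤ u x := fun x => Real.rpow_nonneg (hρ0 x) _
  have hρu : ∀ x, ρ x = u x ^ pconj p := by
    intro x
    have he : (p-1)/p * pconj p = 1 := by rw [pconj]; field_simp
    rw [hudef]
    rw [← Real.rpow_mul (hρ0 x), he, Real.rpow_one]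
  have hucont : Continuous u := hW.1.continuous
  have hρcont : Continuous ρ := by
    have : ρ = fun x => u x ^ pconj p := funext hρu
    rw [this]
    exact hucont.rpow_const fun x => Or.inr hp'0.le
  -- lintegral quantities
  set F : Ed d → ℝ≥0∞ := fun x => ENNReal.ofReal (ρ x) with hFdef
  have hFmeas : AEMeasurable F (volume : Measure (Ed d)) :=
    (hρcont.measurable.ennreal_ofReal).aemeasurable
  have hFr : ∀ x, F x ^ r = ENNReal.ofReal (u x ^ pstar d p) := by
    intro x
    simp only [hFdef]
    rw [ENNReal.ofReal_rpow_of_nonneg (hρ0 x) hr0.le]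
    congr 1
    rw [hρu x, ← Real.rpow_mul (hu0 x), hp'r]
  have hIr_lt : (∫⁻ x : Ed d, F x ^ r) < ⊤ := by
    rw [lintegral_congr hFr]
    exact pstar_finite d p CS hp1' hpd hCS hSob u hu0 hW
  have hI1_lt : (∫⁻ x : Ed d, F x) < ⊤ := by
    have h := (hasFiniteIntegral_iff_ofReal (Filter.Eventually.of_forall hρ0)).mp hρ1.2
    exact h
  have hinterp : (∫⁻ x : Ed d, F x ^ q) ≤
      (∫⁻ x : Ed d, F x) ^ a * (∫⁻ x : Ed d, F x ^ r) ^ (b/r) := by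
    rw [← habq]
    exact lintegral_interp volume F hFmeas a b r ha0 ha1 hb0 hr0 hsum
  have hIq_lt : (∫⁻ x : Ed d, F x ^ q) < ⊤ := by
    refine lt_of_le_of_lt hinterp ?_
    exact ENNReal.mul_lt_top
      (ENNReal.rpow_lt_top_of_nonneg ha0.le hI1_lt.ne)
      (ENNReal.rpow_lt_top_of_nonneg (by positivity) hIr_lt.ne)
  have hmemq : MemLp ρ (ENNReal.ofReal q) (volume : Measure (Ed d)) := by
    refine ⟨hρcont.aestronglyMeasurable, ?_⟩
    have h0 : ENNReal.ofReal q ≠ 0 := by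
      rw [Ne, ENNReal.ofReal_eq_zero, not_le]; exact hq0
    rw [eLpNorm_eq_lintegral_rpow_enorm_toReal h0 ENNReal.ofReal_ne_top,
      ENNReal.toReal_ofReal hq0.le]
    have hc : ∀ x : Ed d, ‖ρ x‖ₑ ^ q = F x ^ q := by
      intro x
      simp only [hFdef]
      rw [← Real.enorm_eq_ofReal (hρ0 x)]
    rw [lintegral_congr hc]
    exact ENNReal.rpow_lt_top_of_nonneg (by positivity) hIq_lt.ne
  -- real-valued quantities
  have hN1 : ∫ x : Ed d, ρ x = (∫⁻ x : Ed d, F x).toReal :=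
    integral_eq_lintegral_of_nonneg_ae (Filter.Eventually.of_forall hρ0)
      hρcont.aestronglyMeasurable
  have hN10 : 0 ≤ ∫ x : Ed d, ρ x := integral_nonneg hρ0
  have hLq : LqNorm q ρ = (∫⁻ x : Ed d, F x ^ q).toReal ^ (1/q) := by
    rw [LqNorm]
    congr 1
    rw [integral_eq_lintegral_of_nonneg_ae
      (Filter.Eventually.of_forall fun x => Real.rpow_nonneg (abs_nonneg _) _)
      ((hρcont.abs.rpow_const fun x => Or.inr hq0.le).aestronglyMeasurable)]
    congr 1
    refine lintegral_congr fun x => ?_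
    simp only [hFdef]
    rw [abs_of_nonneg (hρ0 x), ENNReal.ofReal_rpow_of_nonneg (hρ0 x) hq0.le]
  have hLs : LqNorm (pstar d p) u = (∫⁻ x : Ed d, F x ^ r).toReal ^ (1/pstar d p) := by
    rw [LqNorm]
    congr 1
    rw [integral_eq_lintegral_of_nonneg_ae
      (Filter.Eventually.of_forall fun x => Real.rpow_nonneg (abs_nonneg _) _)
      ((hucont.abs.rpow_const fun x => Or.inr hs0.le).aestronglyMeasurable)]
    congr 1
    refine lintegral_congr fun x => ?_
    rw [abs_of_nonneg (hu0 x), hFr x]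
  -- interpolation in real form
  set N1 : ℝ := ∫ x : Ed d, ρ x with hN1def
  set LS : ℝ := LqNorm (pstar d p) u with hLSdef
  have hLS0 : 0 ≤ LS := by
    rw [hLs]; positivity
  have hLSr : LS ^ (pconj p) = (∫⁻ x : Ed d, F x ^ r).toReal ^ (1/r) := by
    rw [hLs, ← Real.rpow_mul ENNReal.toReal_nonneg]
    congr 1
    rw [hrdef]
    field_simp
  have hstep2 : LqNorm q ρ ≤ N1 ^ (1-θ) * (LS ^ (pconj p)) ^ θ := by
    rw [hLq, hLSr, hN1]
    have htr : (∫⁻ x : Ed d, F x ^ q).toReal ≤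
        (∫⁻ x : Ed d, F x).toReal ^ a * (∫⁻ x : Ed d, F x ^ r).toReal ^ (b/r) := by
      have h2 := ENNReal.toReal_mono ?_ hinterp
      · rw [ENNReal.toReal_mul, ← ENNReal.toReal_rpow, ← ENNReal.toReal_rpow] at h2
        exact h2
      · exact (ENNReal.mul_lt_top
          (ENNReal.rpow_lt_top_of_nonneg ha0.le hI1_lt.ne)
          (ENNReal.rpow_lt_top_of_nonneg (by positivity) hIr_lt.ne)).ne
    calc (∫⁻ x : Ed d, F x ^ q).toReal ^ (1/q)
        ≤ ((∫⁻ x : Ed d, F x).toReal ^ a * (∫⁻ x : Ed d, F x ^ r).toReal ^ (b/r)) ^ (1/q) :=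
          Real.rpow_le_rpow ENNReal.toReal_nonneg htr (by positivity)
      _ = (∫⁻ x : Ed d, F x).toReal ^ (1-θ) *
          ((∫⁻ x : Ed d, F x ^ r).toReal ^ (1/r)) ^ θ := by
          rw [Real.mul_rpow (by positivity) (by positivity),
            ← Real.rpow_mul ENNReal.toReal_nonneg, ← Real.rpow_mul ENNReal.toReal_nonneg,
            ← Real.rpow_mul ENNReal.toReal_nonneg]
          congr 2
          · rw [hadef]; field_simp
          · rw [hbdef]; field_simp
  -- Sobolev step
  have hSu := hSob u hW
  set G : ℝ := LqNorm p fun x => ‖gradient u x‖ with hGdef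
  have hG0 : 0 ≤ G := by
    rw [hGdef, LqNorm]
    positivity
  set X : ℝ := ∫ x : Ed d, ‖gradient u x‖ ^ p with hXdef
  have hX0 : 0 ≤ X := integral_nonneg fun x => Real.rpow_nonneg (norm_nonneg _) _
  have hGX : G ^ p = X := by
    rw [hGdef, LqNorm]
    have h1 : (∫ x : Ed d, |‖gradient u x‖| ^ p) = X := by
      rw [hXdef]
      congr 1
      funext x
      rw [abs_norm]
    rw [h1, ← Real.rpow_mul hX0, one_div, inv_mul_cancel₀ hp0.ne', Real.rpow_one]
  have hfX : fisherInfo p ρ = pconj p ^ p * X := by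
    rw [fisherInfo, hXdef]
  -- exponent bookkeeping
  have hc2 : (pconj p * θ) * 2 = p * α / alphaP d p := by
    rw [hθdef, pconj]
    field_simp
  -- final assembly
  have hZ : LqNorm q ρ ≤ N1 ^ (1-θ) * (CS * G) ^ (pconj p * θ) := by
    refine hstep2.trans ?_
    refine mul_le_mul_of_nonneg_left ?_ (by positivity)
    calc (LS ^ pconj p) ^ θ = LS ^ (pconj p * θ) := by
          rw [← Real.rpow_mul hLS0]
      _ ≤ (CS * G) ^ (pconj p * θ) :=
          Real.rpow_le_rpow hLS0 hSu (by positivity)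
  have hNq0 : 0 ≤ LqNorm q ρ := by rw [hLq]; positivity
  have hsq : LqNorm q ρ ^ 2 ≤
      N1 ^ (2*(1-θ)) * (CS ^ (p * α / alphaP d p) * (G ^ (p * α / alphaP d p))) := by
    calc LqNorm q ρ ^ 2 ≤ (N1 ^ (1-θ) * (CS * G) ^ (pconj p * θ)) ^ 2 :=
          pow_le_pow_left₀ hNq0 hZ 2
      _ = (N1 ^ (1-θ)) ^ 2 * ((CS * G) ^ (pconj p * θ)) ^ 2 := mul_pow _ _ _
      _ = N1 ^ (2*(1-θ)) * (CS * G) ^ (p * α / alphaP d p) := by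
          rw [← Real.rpow_natCast (N1 ^ (1-θ)) 2, ← Real.rpow_natCast ((CS*G) ^ (pconj p * θ)) 2,
            ← Real.rpow_mul hN10, ← Real.rpow_mul (by positivity)]
          have e1 : (1-θ)*((2:ℕ):ℝ) = 2*(1-θ) := by push_cast; ring
          have e2 : (pconj p*θ)*((2:ℕ):ℝ) = p*α/alphaP d p := by push_cast; exact hc2
          rw [e1, e2]
      _ = N1 ^ (2*(1-θ)) * (CS ^ (p * α / alphaP d p) * (G ^ (p * α / alphaP d p))) := by
          rw [Real.mul_rpow hCS.le hG0]
  have hGe : G ^ (p * α / alphaP d p) = X ^ (α / alphaP d p) := by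
    have h1 : p * α / alphaP d p = p * (α / alphaP d p) := by ring
    rw [h1, Real.rpow_mul hG0, hGX]
  have hRHS : CH * ((pconj p)⁻¹ * CS) ^ (p*α/alphaP d p) * N1 ^ (2*(1-θ)) *
      fisherInfo p ρ ^ (α/alphaP d p)
      = CH * (N1 ^ (2*(1-θ)) * (CS ^ (p*α/alphaP d p) * G ^ (p*α/alphaP d p))) := by
    rw [hfX, hGe]
    rw [Real.mul_rpow (inv_nonneg.mpr hp'0.le) hCS.le]
    rw [Real.mul_rpow (by positivity) hX0]
    rw [← Real.rpow_mul hp'0.le]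
    rw [Real.inv_rpow hp'0.le]
    have hpe : p * (α/alphaP d p) = p*α/alphaP d p := by ring
    rw [hpe]
    have hne : (pconj p) ^ (p*α/alphaP d p) ≠ 0 := (Real.rpow_pos_of_pos hp'0 _).ne'
    field_simp
  calc (∫ x : Ed d, ∫ y : Ed d, ‖x - y‖ ^ (-α) * ρ x * ρ y)
      ≤ CH * LqNorm q ρ ^ 2 := hHLS ρ hρ0 hmemq
    _ ≤ CH * (N1 ^ (2*(1-θ)) * (CS ^ (p * α / alphaP d p) * (G ^ (p * α / alphaP d p)))) :=
        mul_le_mul_of_nonneg_left hsq hCH.le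
    _ = CH * ((pconj p)⁻¹ * CS) ^ (p*α/alphaP d p) * N1 ^ (2*(1-θ)) *
        fisherInfo p ρ ^ (α/alphaP d p) := hRHS.symm
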